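/- Let ((X_i, 𝒰_i))_{i ∈ I} be a family of uniform spaces and let 𝓕 be a filter on I. The topology on ∏_{i ∈ I} X_i induced by the 𝓕-uniformity (a set G is open iff for every x ∈ G there is an entourage U of the 𝓕-uniformity with U[x] = {y : (x,y) ∈ U} ⊆ G) coincides with the 𝓕-topology on ∏_{i ∈ I} X_i obtained from the uniform topologies of the factor spaces X_i. -/

import Mathlib

open Set TopologicalSpace Topology Filter Uniformity

/-- The `𝓕`-topology on `∏ i, X i` determined by a filter `F` on `I`: the topology
generated by the boxes `∏ i, U i` (each `U i` open) whose set of distinguished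
indices `{i | U i = univ}` belongs to `F`. -/
def FTopology {I : Type*} (X : I → Type*) [∀ i, TopologicalSpace (X i)]
    (F : Filter I) : TopologicalSpace (∀ i, X i) :=
  TopologicalSpace.generateFrom
    {S | ∃ U : ∀ i, Set (X i), (∀ i, IsOpen (U i)) ∧ {i | U i = Set.univ} ∈ F ∧
      S = Set.pi Set.univ U}

/-- The `𝓕`-uniformity filter on `(∏ i, X i) × (∏ i, X i)`: the filter generated
by the boxes of entourages `∏ i, B i` (under the identification with
`∏ i, (X i × X i)`) with `B i ∈ 𝓤 (X i)` for all `i` and distinguished index set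
`{i | B i = univ}` in `F`. -/
def FUniformity {I : Type*} (X : I → Type*) [∀ i, UniformSpace (X i)]
    (F : Filter I) : Filter ((∀ i, X i) × (∀ i, X i)) :=
  Filter.generate
    {S | ∃ B : ∀ i, Set (X i × X i), (∀ i, B i ∈ 𝓤 (X i)) ∧
      {i | B i = Set.univ} ∈ F ∧ S = {p | ∀ i, (p.1 i, p.2 i) ∈ B i}}

/-- The topology induced on `∏ i, X i` by the `𝓕`-uniformity (a set `G` is open
iff around every `x ∈ G` it contains the ball `U[x]` of some entourage `U` of the
`𝓕`-uniformity) coincides with the `𝓕`-topology obtained from the uniform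
topologies of the factors. -/
theorem fUniformity_topology_eq_fTopology {I : Type*} (X : I → Type*)
    [∀ i, UniformSpace (X i)] (F : Filter I) :
    ∀ G : Set (∀ i, X i),
      (∀ x ∈ G, ∃ U ∈ FUniformity X F, {y | (x, y) ∈ U} ⊆ G) ↔
        IsOpen[FTopology X F] G := by
  classical
  intro G
  constructor
  · intro h
    -- for each x ∈ G find a basic box x ∈ S ⊆ G
    have key : ∀ x ∈ G, ∃ S, (∃ U : ∀ i, Set (X i), (∀ i, IsOpen (U i)) ∧
        {i | U i = Set.univ} ∈ F ∧ S = Set.pi Set.univ U) ∧ x ∈ S ∧ S ⊆ G := by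
      intro x hx
      obtain ⟨U, hU, hball⟩ := h x hx
      rw [FUniformity, Filter.mem_generate_iff] at hU
      obtain ⟨t, hts, htf, hsub⟩ := hU
      -- a single generator inside ⋂₀ t
      have hgen0 : ∀ t : Set (Set ((∀ i, X i) × (∀ i, X i))), t.Finite →
          t ⊆ {S | ∃ B : ∀ i, Set (X i × X i), (∀ i, B i ∈ 𝓤 (X i)) ∧
            {i | B i = Set.univ} ∈ F ∧ S = {p | ∀ i, (p.1 i, p.2 i) ∈ B i}} →
          ∃ B : ∀ i, Set (X i × X i), (∀ i, B i ∈ 𝓤 (X i)) ∧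
          {i | B i = Set.univ} ∈ F ∧
          {p : (∀ i, X i) × (∀ i, X i) | ∀ i, (p.1 i, p.2 i) ∈ B i} ⊆ ⋂₀ t := by
        intro t htf
        refine Set.Finite.induction_on (motive := fun t _ =>
          t ⊆ {S | ∃ B : ∀ i, Set (X i × X i), (∀ i, B i ∈ 𝓤 (X i)) ∧
            {i | B i = Set.univ} ∈ F ∧ S = {p | ∀ i, (p.1 i, p.2 i) ∈ B i}} →
          ∃ B : ∀ i, Set (X i × X i), (∀ i, B i ∈ 𝓤 (X i)) ∧
          {i | B i = Set.univ} ∈ F ∧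
          {p : (∀ i, X i) × (∀ i, X i) | ∀ i, (p.1 i, p.2 i) ∈ B i} ⊆ ⋂₀ t) t htf ?_ ?_
        · exact fun _ => ⟨fun i => Set.univ, fun i => Filter.univ_mem,
            by simp, by simp⟩
        · intro s t hs htfin ih hts
          obtain ⟨B, hB, hBF, hBsub⟩ := ih (fun u hu => hts (Set.mem_insert_of_mem _ hu))
          obtain ⟨B', hB', hB'F, rfl⟩ := hts (Set.mem_insert s t)
          refine ⟨fun i => B i ∩ B' i, fun i => Filter.inter_mem (hB i) (hB' i), ?_, ?_⟩
          · filter_upwards [hBF, hB'F] with i h1 h2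
            show B i ∩ B' i = Set.univ
            rw [h1, h2, Set.univ_inter]
          · intro p hp
            rw [Set.sInter_insert]
            exact ⟨fun i => (hp i).2, hBsub fun i => (hp i).1⟩
      obtain ⟨B, hB, hBF, hBsub⟩ := hgen0 t htf hts
      refine ⟨Set.pi Set.univ (fun i => interior (UniformSpace.ball (x i) (B i))),
        ⟨fun i => interior (UniformSpace.ball (x i) (B i)), fun i => isOpen_interior, ?_, rfl⟩,
        ?_, ?_⟩
      · filter_upwards [hBF] with i hi
        show interior (UniformSpace.ball (x i) (B i)) = Set.univ
        simp [UniformSpace.ball, hi]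
      · intro i _
        exact mem_interior_iff_mem_nhds.2 (UniformSpace.ball_mem_nhds _ (hB i))
      · intro y hy
        apply hball
        apply hsub
        apply hBsub
        intro i
        have hyi : y i ∈ UniformSpace.ball (x i) (B i) :=
          interior_subset (hy i (Set.mem_univ i))
        exact hyi
    choose! S hSgen hxS hSG using key
    have hGeq : G = ⋃ x ∈ G, S x := by
      apply Set.Subset.antisymm
      · intro x hx
        exact Set.mem_biUnion hx (hxS x hx)
      · intro y hy
        obtain ⟨x, hx, hyx⟩ := Set.mem_iUnion₂.1 hy
        exact hSG x hx hyx
    rw [hGeq]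
    letI := FTopology X F
    apply isOpen_biUnion
    intro x hx
    exact TopologicalSpace.isOpen_generateFrom_of_mem (hSgen x hx)
  · intro h
    have h' : TopologicalSpace.GenerateOpen
        {S | ∃ U : ∀ i, Set (X i), (∀ i, IsOpen (U i)) ∧ {i | U i = Set.univ} ∈ F ∧
          S = Set.pi Set.univ U} G := h
    clear h
    induction h' with
    | basic S hS =>
      obtain ⟨U, hUopen, hUF, rfl⟩ := hS
      intro x hx
      have hxi : ∀ i, x i ∈ U i := fun i => hx i (Set.mem_univ i)
      have hB : ∀ i, ∃ B ∈ 𝓤 (X i), UniformSpace.ball (x i) B ⊆ U i := fun i =>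
        UniformSpace.mem_nhds_iff.1 ((hUopen i).mem_nhds (hxi i))
      choose B hBmem hBsub using hB
      set B' : ∀ i, Set (X i × X i) := fun i => if U i = Set.univ then Set.univ else B i
        with hB'def
      have hB'mem : ∀ i, B' i ∈ 𝓤 (X i) := by
        intro i
        by_cases hi : U i = Set.univ <;> simp [hB'def, hi, hBmem i]
      refine ⟨{p | ∀ i, (p.1 i, p.2 i) ∈ B' i}, ?_, ?_⟩
      · exact Filter.mem_generate_of_mem ⟨B', hB'mem, by
          filter_upwards [hUF] with i hi
          show B' i = Set.univ
          simp [hB'def, hi], rfl⟩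
      · intro y hy
        intro i _
        have := hy i
        by_cases hi : U i = Set.univ
        · rw [hi]; trivial
        · simp only [hB'def, hi, if_false] at this
          exact hBsub i this
    | univ =>
      intro x _
      exact ⟨Set.univ, Filter.univ_mem, by simp⟩
    | inter s t _ _ ihs iht =>
      intro x hx
      obtain ⟨U1, hU1, hb1⟩ := ihs x hx.1
      obtain ⟨U2, hU2, hb2⟩ := iht x hx.2
      exact ⟨U1 ∩ U2, Filter.inter_mem hU1 hU2,
        fun y hy => ⟨hb1 hy.1, hb2 hy.2⟩⟩
    | sUnion Ss _ ih =>
      intro x hx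
      obtain ⟨s, hs, hxs⟩ := hx
      obtain ⟨U, hU, hb⟩ := ih s hs x hxs
      exact ⟨U, hU, fun y hy => ⟨s, hs, hb hy⟩⟩
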